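/- Let (X, {d_r}) satisfy the weaker d_r-axioms and suppose in addition that each d_r is symmetric: d_r(x,y) = d_r(y,x) for all r > 0 and x, y ∈ X. Then there exists a uniform space structure on X whose uniformity filter is generated by the sets U_{r,ε} (r > 0, ε > 0); equivalently, the filter generated by {U_{r,ε}} satisfies: every member contains the diagonal; the inverse U⁻¹ = {(y,x) | (x,y) ∈ U} of every member is a member; and every member U admits a member V with V ∘ V ⊆ U. -/

import Mathlib

open ENNReal

/-- The weaker `d_r`-axioms for a family of metric-like functions
`d : ℝ → X → X → ℝ≥0∞` indexed by `r > 0`. -/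
structure WeakerDr {X : Type*} (d : ℝ → X → X → ℝ≥0∞) : Prop where
  self : ∀ (x : X) (r : ℝ), 0 < r → d r x x = 0
  mono : ∀ (x y : X) (r₁ r₂ : ℝ), 0 < r₁ → r₁ ≤ r₂ → d r₁ x y ≤ d r₂ x y
  usc : ∀ (x y : X) (r ε : ℝ), 0 < r → 0 < ε → d r x y < ENNReal.ofReal ε →
    ∃ δ : ℝ, 0 < δ ∧ d (r + δ) x y < ENNReal.ofReal ε
  weaker_tri : ∀ (x y z : X) (r₁ r₂ r₃ : ℝ), 0 < r₁ → 0 < r₂ → 0 < r₃ →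
    d (r₁ + r₂ + r₃) x y < ENNReal.ofReal r₃ → d (r₁ + r₂ + r₃) y z < ENNReal.ofReal r₂ →
    d r₁ x z ≤ d (r₁ + r₂ + r₃) x y + d (r₁ + r₂ + r₃) y z

/-- The basic entourage `U_{r,ε} = {(x,y) | d_r(x,y) < ε}`. -/
def entourageDr {X : Type*} (d : ℝ → X → X → ℝ≥0∞) (r ε : ℝ) : Set (X × X) :=
  {p | d r p.1 p.2 < ENNReal.ofReal ε}

lemma entourage_mono {X : Type*} (d : ℝ → X → X → ℝ≥0∞) (h : WeakerDr d)
    {r r' ε ε' : ℝ} (hr : 0 < r) (hrr : r ≤ r') (hee : ε' ≤ ε) :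
    entourageDr d r' ε' ⊆ entourageDr d r ε := by
  intro p hp
  exact lt_of_le_of_lt (h.mono p.1 p.2 r r' hr hrr)
    (lt_of_lt_of_le hp (ENNReal.ofReal_le_ofReal hee))

lemma mem_gen_iff {X : Type*} (d : ℝ → X → X → ℝ≥0∞) (h : WeakerDr d)
    (u : Set (X × X)) :
    u ∈ Filter.generate {U : Set (X × X) | ∃ r ε : ℝ, 0 < r ∧ 0 < ε ∧
        U = entourageDr d r ε} ↔
      ∃ r ε : ℝ, 0 < r ∧ 0 < ε ∧ entourageDr d r ε ⊆ u := by
  constructor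
  · intro hu
    rw [Filter.mem_generate_iff] at hu
    obtain ⟨t, hts, htf, hsub⟩ := hu
    suffices hcl : ∃ r ε : ℝ, 0 < r ∧ 0 < ε ∧ entourageDr d r ε ⊆ ⋂₀ t by
      obtain ⟨r, ε, hr, hε, hs⟩ := hcl
      exact ⟨r, ε, hr, hε, hs.trans hsub⟩
    clear hsub
    refine Set.Finite.induction_on
      (motive := fun t _ => t ⊆ {U : Set (X × X) | ∃ r ε : ℝ, 0 < r ∧ 0 < ε ∧
        U = entourageDr d r ε} → ∃ r ε : ℝ, 0 < r ∧ 0 < ε ∧ entourageDr d r ε ⊆ ⋂₀ t)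
      t htf (fun _ => ⟨1, 1, one_pos, one_pos, by simp⟩) ?_ hts
    intro V t' hnm htf' ih hts
    obtain ⟨r₀, ε₀, hr₀, hε₀, hV⟩ := hts (Set.mem_insert _ _)
    obtain ⟨r, ε, hr, hε, hs⟩ := ih (fun W hW => hts (Set.mem_insert_of_mem _ hW))
    refine ⟨max r r₀, min ε ε₀, lt_max_of_lt_left hr, lt_min hε hε₀, ?_⟩
    rw [Set.sInter_insert]
    refine Set.subset_inter ?_ ?_
    · rw [hV]
      exact entourage_mono d h hr₀ (le_max_right _ _) (min_le_right _ _)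
    · exact (entourage_mono d h hr (le_max_left _ _) (min_le_left _ _)).trans hs
  · rintro ⟨r, ε, hr, hε, hs⟩
    exact Filter.mem_of_superset (Filter.mem_generate_of_mem ⟨r, ε, hr, hε, rfl⟩) hs

theorem stmt_10 {X : Type*} (d : ℝ → X → X → ℝ≥0∞) (h : WeakerDr d)
    (hsymm : ∀ (r : ℝ), 0 < r → ∀ x y : X, d r x y = d r y x) :
    ∃ u : UniformSpace X,
      @uniformity X u =
        Filter.generate {U : Set (X × X) | ∃ r ε : ℝ, 0 < r ∧ 0 < ε ∧
          U = entourageDr d r ε} := by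
  set S : Set (Set (X × X)) := {U : Set (X × X) | ∃ r ε : ℝ, 0 < r ∧ 0 < ε ∧
    U = entourageDr d r ε} with hS
  set F := Filter.generate S with hF
  have hrefl : Filter.principal SetRel.id ≤ F := by
      intro u hu
      obtain ⟨r, ε, hr, hε, hs⟩ := (mem_gen_iff d h u).1 hu
      intro p hp
      rcases p with ⟨x, y⟩
      rw [SetRel.mem_id] at hp
      subst hp
      refine hs ?_
      show d r x x < ENNReal.ofReal ε
      rw [h.self x r hr]
      simpa using hε
  have hsy : Filter.Tendsto Prod.swap F F := by
      intro u hu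
      obtain ⟨r, ε, hr, hε, hs⟩ := (mem_gen_iff d h u).1 hu
      refine (mem_gen_iff d h _).2 ⟨r, ε, hr, hε, ?_⟩
      intro p hp
      refine hs ?_
      show d r p.2 p.1 < ENNReal.ofReal ε
      rw [hsymm r hr p.2 p.1]
      exact hp
  have hco : (F.lift' fun s => SetRel.comp s s) ≤ F := by
      intro u hu
      obtain ⟨r, ε, hr, hε, hs⟩ := (mem_gen_iff d h u).1 hu
      have hVmem : entourageDr d (r + ε) (ε / 2) ∈ F :=
        (mem_gen_iff d h _).2 ⟨r + ε, ε / 2, by linarith, by linarith, le_refl _⟩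
      refine Filter.mem_of_superset (Filter.mem_lift' hVmem) ?_
      rintro ⟨x, z⟩ ⟨y, hxy, hyz⟩
      refine hs ?_
      show d r x z < ENNReal.ofReal ε
      have hxy' : d (r + ε/2 + ε/2) x y < ENNReal.ofReal (ε/2) := by
        rw [show r + ε/2 + ε/2 = r + ε by ring]; exact hxy
      have hyz' : d (r + ε/2 + ε/2) y z < ENNReal.ofReal (ε/2) := by
        rw [show r + ε/2 + ε/2 = r + ε by ring]; exact hyz
      have htri := h.weaker_tri x y z r (ε/2) (ε/2) hr (by linarith) (by linarith) hxy' hyz'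
      calc d r x z ≤ d (r + ε/2 + ε/2) x y + d (r + ε/2 + ε/2) y z := htri
        _ < ENNReal.ofReal (ε/2) + ENNReal.ofReal (ε/2) :=
            ENNReal.add_lt_add hxy' hyz'
        _ = ENNReal.ofReal ε := by
            rw [← ENNReal.ofReal_add (by linarith) (by linarith)]
            norm_num
  exact ⟨UniformSpace.ofCore ⟨F, hrefl, hsy, hco⟩, rfl⟩
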